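/- Let $m \ge 2$, $p \ge 1$, and let $A_1, \dots, A_p$ be real symmetric $m \times m$ matrices each with trace zero. Then $\sum_{r=1}^{p} \sum_{s=1}^{p} \| [A_r, A_s] \|^2 \le \left( \sum_{r=1}^{p} \|A_r\|^2 \right)^2$, where $[A_r, A_s] = A_r A_s - A_s A_r$ is the matrix commutator and $\|\cdot\|$ is the Frobenius norm. -/

import Mathlib

open Matrix BigOperators

/-- Squared Frobenius norm of a real `m × m` matrix: `‖A‖² = ∑ i j, A i j ^ 2`. -/
def frobSq {m : ℕ} (A : Matrix (Fin m) (Fin m) ℝ) : ℝ := ∑ i, ∑ j, (A i j) ^ 2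

namespace DDVV

open Finset

variable {m p : ℕ}

/-- Frobenius inner product. -/
def ip {m : ℕ} (A B : Matrix (Fin m) (Fin m) ℝ) : ℝ := ∑ i, ∑ j, A i j * B i j

lemma frobSq_eq_ip (A : Matrix (Fin m) (Fin m) ℝ) : frobSq A = ip A A := by
  simp [frobSq, ip, sq]

lemma ip_comm (A B : Matrix (Fin m) (Fin m) ℝ) : ip A B = ip B A := by
  simp [ip, mul_comm]

lemma ip_eq_trace (A B : Matrix (Fin m) (Fin m) ℝ) : ip A B = trace (Aᵀ * B) := by
  simp [ip, trace, Matrix.mul_apply, Matrix.diag, Matrix.transpose_apply]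
  rw [Finset.sum_comm]

lemma ip_self_nonneg (A : Matrix (Fin m) (Fin m) ℝ) : 0 ≤ ip A A := by
  apply Finset.sum_nonneg; intro i _; apply Finset.sum_nonneg; intro j _; exact mul_self_nonneg _

lemma ip_add_left (A B C : Matrix (Fin m) (Fin m) ℝ) : ip (A + B) C = ip A C + ip B C := by
  simp [ip, add_mul, Finset.sum_add_distrib]

lemma ip_sub_left (A B C : Matrix (Fin m) (Fin m) ℝ) : ip (A - B) C = ip A C - ip B C := by
  simp [ip, sub_mul, Finset.sum_sub_distrib]

lemma ip_smul_left (c : ℝ) (A B : Matrix (Fin m) (Fin m) ℝ) : ip (c • A) B = c * ip A B := by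
  simp [ip, Finset.mul_sum, mul_assoc]

lemma ip_smul_right (c : ℝ) (A B : Matrix (Fin m) (Fin m) ℝ) : ip A (c • B) = c * ip A B := by
  rw [ip_comm, ip_smul_left, ip_comm]

lemma ip_sub_right (A B C : Matrix (Fin m) (Fin m) ℝ) : ip A (B - C) = ip A B - ip A C := by
  rw [ip_comm, ip_sub_left, ip_comm A B, ip_comm A C]

lemma ip_sum_left {ι : Type*} (s : Finset ι) (f : ι → Matrix (Fin m) (Fin m) ℝ)
    (B : Matrix (Fin m) (Fin m) ℝ) : ip (∑ r ∈ s, f r) B = ∑ r ∈ s, ip (f r) B := by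
  simp only [ip, Matrix.sum_apply, Finset.sum_mul]
  have h : ∀ i : Fin m, ∑ j : Fin m, ∑ r ∈ s, f r i j * B i j
      = ∑ r ∈ s, ∑ j : Fin m, f r i j * B i j := fun i => Finset.sum_comm

  simp_rw [h]
  rw [Finset.sum_comm]

lemma ip_sum_right {ι : Type*} (s : Finset ι) (f : ι → Matrix (Fin m) (Fin m) ℝ)
    (B : Matrix (Fin m) (Fin m) ℝ) : ip B (∑ r ∈ s, f r) = ∑ r ∈ s, ip B (f r) := by
  rw [ip_comm, ip_sum_left]; simp [ip_comm]

lemma ip_self_eq_zero {A : Matrix (Fin m) (Fin m) ℝ} (h : ip A A = 0) : A = 0 := by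
  ext i j
  have h1 : ∀ i ∈ (univ : Finset (Fin m)), (0:ℝ) ≤ ∑ j, A i j * A i j := by
    intro i _; exact Finset.sum_nonneg fun j _ => mul_self_nonneg _
  have h2 := (Finset.sum_eq_zero_iff_of_nonneg h1).1 h i (mem_univ i)
  have h3 : ∀ j ∈ (univ : Finset (Fin m)), (0:ℝ) ≤ A i j * A i j :=
    fun j _ => mul_self_nonneg _
  have := (Finset.sum_eq_zero_iff_of_nonneg h3).1 h2 j (mem_univ j)
  simpa [mul_self_eq_zero] using this

/-- commutator -/
def cm {m : ℕ} (X Y : Matrix (Fin m) (Fin m) ℝ) : Matrix (Fin m) (Fin m) ℝ := X * Y - Y * X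

lemma cm_skew (X Y : Matrix (Fin m) (Fin m) ℝ) : cm X Y = - cm Y X := by
  simp [cm]

lemma ip_neg_neg (A B : Matrix (Fin m) (Fin m) ℝ) : ip (-A) (-B) = ip A B := by
  simp [ip]

lemma cm_smul (c d : ℝ) (X Y : Matrix (Fin m) (Fin m) ℝ) :
    cm (c • X) (d • Y) = (c * d) • cm X Y := by
  simp [cm, Matrix.smul_mul, Matrix.mul_smul, smul_smul, mul_comm, smul_sub]

lemma trace_conj {n : ℕ} (U M : Matrix (Fin n) (Fin n) ℝ) (hU : Uᵀ * U = 1) :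
    trace (U * M * Uᵀ) = trace M := by
  rw [trace_mul_comm, ← Matrix.mul_assoc, hU, Matrix.one_mul]

lemma ip_conj {n : ℕ} (U P Q : Matrix (Fin n) (Fin n) ℝ) (hU : Uᵀ * U = 1) :
    ip (U * P * Uᵀ) (U * Q * Uᵀ) = ip P Q := by
  rw [ip_eq_trace, ip_eq_trace]
  have h1 : (U * P * Uᵀ)ᵀ = U * Pᵀ * Uᵀ := by
    simp [Matrix.transpose_mul, Matrix.mul_assoc]
  rw [h1]
  have hU' : ∀ M : Matrix (Fin n) (Fin n) ℝ, Uᵀ * (U * M) = M := fun M => by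
    rw [← Matrix.mul_assoc, hU, Matrix.one_mul]
  have h2 : U * Pᵀ * Uᵀ * (U * Q * Uᵀ) = U * (Pᵀ * Q) * Uᵀ := by
    simp only [Matrix.mul_assoc, hU']
  rw [h2, trace_conj _ _ hU]

lemma cm_conj {n : ℕ} (U X Y : Matrix (Fin n) (Fin n) ℝ) (hU : Uᵀ * U = 1) :
    cm (U * X * Uᵀ) (U * Y * Uᵀ) = U * cm X Y * Uᵀ := by
  simp only [cm]
  have hU' : ∀ M : Matrix (Fin n) (Fin n) ℝ, Uᵀ * (U * M) = M := fun M => by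
    rw [← Matrix.mul_assoc, hU, Matrix.one_mul]
  have h : ∀ P Q : Matrix (Fin n) (Fin n) ℝ,
      U * P * Uᵀ * (U * Q * Uᵀ) = U * (P * Q) * Uᵀ := by
    intro P Q
    simp only [Matrix.mul_assoc, hU']
  rw [h, h, ← Matrix.sub_mul, ← Matrix.mul_sub]

lemma exists_diag {n : ℕ} (X : Matrix (Fin n) (Fin n) ℝ) (hX : X.IsSymm) :
    ∃ (U : Matrix (Fin n) (Fin n) ℝ) (lam : Fin n → ℝ),
      Uᵀ * U = 1 ∧ U * Uᵀ = 1 ∧ X = U * Matrix.diagonal lam * Uᵀ := by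
  have hH : X.IsHermitian := by
    rw [Matrix.IsHermitian, Matrix.conjTranspose_eq_transpose_of_trivial]
    exact hX
  refine ⟨(Matrix.IsHermitian.eigenvectorUnitary hH : Matrix (Fin n) (Fin n) ℝ),
    hH.eigenvalues, ?_, ?_, ?_⟩
  · have := Matrix.mem_unitaryGroup_iff'.mp (Matrix.IsHermitian.eigenvectorUnitary hH).2
    rwa [Matrix.star_eq_conjTranspose, Matrix.conjTranspose_eq_transpose_of_trivial] at this
  · have := Matrix.mem_unitaryGroup_iff.mp (Matrix.IsHermitian.eigenvectorUnitary hH).2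
    rwa [Matrix.star_eq_conjTranspose, Matrix.conjTranspose_eq_transpose_of_trivial] at this
  · have h := hH.spectral_theorem
    rw [Unitary.conjStarAlgAut_apply, Matrix.star_eq_conjTranspose, Matrix.conjTranspose_eq_transpose_of_trivial] at h
    have he : RCLike.ofReal ∘ hH.eigenvalues = hH.eigenvalues := by
      funext i
      simp [RCLike.ofReal_real_eq_id]
    rw [he] at h
    exact h

/-! ### Lemma A: top-K sums of squared gaps (Laplacian bound) -/

def gval {n : ℕ} (e f : Fin n × Fin n) : ℝ :=
  (if e.1 = f.1 then (1:ℝ) else 0) + (if e.2 = f.2 then 1 else 0)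
    - (if e.1 = f.2 then 1 else 0) - (if e.2 = f.1 then 1 else 0)

lemma sum_ind_ind {n : ℕ} (a b : Fin n) :
    ∑ x : Fin n, (if a = x then (1:ℝ) else 0) * (if b = x then 1 else 0)
      = if a = b then 1 else 0 := by
  have h : ∀ x : Fin n, (if a = x then (1:ℝ) else 0) * (if b = x then 1 else 0)
      = if a = x then (if b = x then (1:ℝ) else 0) else 0 := by
    intro x; split_ifs <;> ring
  simp_rw [h, Finset.sum_ite_eq, Finset.mem_univ, if_true]
  by_cases hab : a = b
  · subst hab; rfl
  · rw [if_neg (fun hba => hab hba.symm), if_neg hab]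

lemma sum_dd_eq_gval {n : ℕ} (e f : Fin n × Fin n) :
    ∑ x : Fin n, ((if e.1 = x then (1:ℝ) else 0) - (if e.2 = x then 1 else 0))
      * ((if f.1 = x then (1:ℝ) else 0) - (if f.2 = x then 1 else 0)) = gval e f := by
  have h : ∀ x : Fin n, ((if e.1 = x then (1:ℝ) else 0) - (if e.2 = x then 1 else 0))
      * ((if f.1 = x then (1:ℝ) else 0) - (if f.2 = x then 1 else 0))
      = (if e.1 = x then (1:ℝ) else 0) * (if f.1 = x then 1 else 0)
        + (if e.2 = x then (1:ℝ) else 0) * (if f.2 = x then 1 else 0)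
        - (if e.1 = x then (1:ℝ) else 0) * (if f.2 = x then 1 else 0)
        - (if e.2 = x then (1:ℝ) else 0) * (if f.1 = x then 1 else 0) := by
    intro x; ring
  simp_rw [h]
  rw [Finset.sum_sub_distrib, Finset.sum_sub_distrib, Finset.sum_add_distrib,
    sum_ind_ind, sum_ind_ind, sum_ind_ind, sum_ind_ind]
  rfl

lemma gval_self {n : ℕ} (e : Fin n × Fin n) (he : e.1 < e.2) : gval e e = 2 := by
  have h1 : e.1 ≠ e.2 := ne_of_lt he
  simp [gval, h1, h1.symm]
  norm_num

lemma gval_abs_le {n : ℕ} (e f : Fin n × Fin n) (he : e.1 < e.2) (hf : f.1 < f.2)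
    (hef : e ≠ f) : |gval e f| ≤ 1 := by
  have he' : (e.1 : ℕ) < (e.2 : ℕ) := he
  have hf' : (f.1 : ℕ) < (f.2 : ℕ) := hf
  have hee : ¬ e.1 = e.2 := ne_of_lt he
  have hff : ¬ f.1 = f.2 := ne_of_lt hf
  unfold gval
  by_cases h1 : e.1 = f.1
  · by_cases h2 : e.2 = f.2
    · exact absurd (Prod.ext h1 h2) hef
    · have h3 : ¬ e.1 = f.2 := fun h => hff (h1.symm.trans h)
      have h4 : ¬ e.2 = f.1 := fun h => hee (h1.trans h.symm)
      rw [if_pos h1, if_neg h2, if_neg h3, if_neg h4]; norm_num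
  · by_cases h2 : e.2 = f.2
    · have h3 : ¬ e.1 = f.2 := fun h => hee (h.trans h2.symm)
      have h4 : ¬ e.2 = f.1 := fun h => hff (h.symm.trans h2)
      rw [if_neg h1, if_pos h2, if_neg h3, if_neg h4]; norm_num
    · by_cases h3 : e.1 = f.2
      · have h4 : ¬ e.2 = f.1 := by
          intro h4
          have ha : (e.1 : ℕ) = (f.2 : ℕ) := congrArg Fin.val h3
          have hb : (e.2 : ℕ) = (f.1 : ℕ) := congrArg Fin.val h4
          omega
        rw [if_neg h1, if_neg h2, if_pos h3, if_neg h4]; norm_num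
      · by_cases h4 : e.2 = f.1
        · rw [if_neg h1, if_neg h2, if_neg h3, if_pos h4]; norm_num
        · rw [if_neg h1, if_neg h2, if_neg h3, if_neg h4]; norm_num

lemma lemmaA {n : ℕ} (lam : Fin n → ℝ) (S : Finset (Fin n × Fin n))
    (hS : ∀ e ∈ S, e.1 < e.2) :
    ∑ e ∈ S, (lam e.1 - lam e.2)^2 ≤ ((S.card : ℝ) + 1) * ∑ i, (lam i)^2 := by
  set t : Fin n × Fin n → ℝ := fun e => lam e.1 - lam e.2 with ht
  set Q : ℝ := ∑ e ∈ S, (t e)^2 with hQ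
  set α : ℝ := ∑ i, (lam i)^2 with hα
  have hQ0 : 0 ≤ Q := Finset.sum_nonneg fun e _ => sq_nonneg _
  have hα0 : 0 ≤ α := Finset.sum_nonneg fun i _ => sq_nonneg _
  set v : Fin n → ℝ := fun x =>
    ∑ e ∈ S, t e * ((if e.1 = x then (1:ℝ) else 0) - (if e.2 = x then 1 else 0)) with hv
  -- claim 1 : ∑ x, lam x * v x = Q
  have claim1 : ∑ x : Fin n, lam x * v x = Q := by
    simp only [hv, Finset.mul_sum]
    rw [Finset.sum_comm]
    refine Finset.sum_congr rfl fun e _ => ?_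
    have : ∀ x, lam x * (t e * ((if e.1 = x then (1:ℝ) else 0) - (if e.2 = x then 1 else 0)))
        = t e * (lam x * (if e.1 = x then (1:ℝ) else 0)
            - lam x * (if e.2 = x then 1 else 0)) := by intro x; ring
    simp_rw [this, ← Finset.mul_sum, Finset.sum_sub_distrib]
    have h1 : ∀ a : Fin n, ∑ x : Fin n, lam x * (if a = x then (1:ℝ) else 0) = lam a := by
      intro a
      have : ∀ x, lam x * (if a = x then (1:ℝ) else 0) = if a = x then lam x else 0 := by
        intro x; split_ifs <;> ring
      simp_rw [this, Finset.sum_ite_eq, Finset.mem_univ, if_true]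
    rw [h1, h1]
    ring
  -- claim 2 : ∑ x, (v x)^2 ≤ (K+1) Q
  have claim2 : ∑ x : Fin n, (v x)^2 ≤ ((S.card : ℝ) + 1) * Q := by
    have expand : ∑ x : Fin n, (v x)^2
        = ∑ e ∈ S, ∑ f ∈ S, t e * t f * gval e f := by
      simp only [hv, sq, Finset.sum_mul_sum]
      rw [Finset.sum_comm]
      refine Finset.sum_congr rfl fun e _ => ?_
      rw [Finset.sum_comm]
      refine Finset.sum_congr rfl fun f _ => ?_
      rw [← sum_dd_eq_gval e f, Finset.mul_sum]
      refine Finset.sum_congr rfl fun x _ => ?_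
      ring
    rw [expand]
    have bound : ∑ e ∈ S, ∑ f ∈ S, t e * t f * gval e f
        ≤ ∑ e ∈ S, ∑ f ∈ S, (|t e| * |t f| + if e = f then (t e)^2 else 0) := by
      refine Finset.sum_le_sum fun e heS => Finset.sum_le_sum fun f hfS => ?_
      by_cases hef : e = f
      · subst hef
        rw [gval_self e (hS e heS)]
        simp only [eq_self_iff_true, if_true]
        have habs : |t e| * |t e| = t e * t e := abs_mul_abs_self _
        rw [habs, sq]
        linarith
      · simp only [if_neg hef]
        have : t e * t f * gval e f ≤ |t e| * |t f| := by
          calc t e * t f * gval e f ≤ |t e * t f * gval e f| := le_abs_self _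
            _ = |t e| * |t f| * |gval e f| := by rw [abs_mul, abs_mul]
            _ ≤ |t e| * |t f| * 1 := by
                apply mul_le_mul_of_nonneg_left (gval_abs_le e f (hS e heS) (hS f hfS) hef)
                positivity
            _ = |t e| * |t f| := by ring
        linarith
    have rhs_eq : ∑ e ∈ S, ∑ f ∈ S, (|t e| * |t f| + if e = f then (t e)^2 else 0)
        = (∑ e ∈ S, |t e|) * (∑ e ∈ S, |t e|) + Q := by
      have h1 : ∀ e ∈ S, ∑ f ∈ S, (|t e| * |t f| + if e = f then (t e)^2 else 0)
          = |t e| * (∑ f ∈ S, |t f|) + (t e)^2 := by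
        intro e heS
        rw [Finset.sum_add_distrib, ← Finset.mul_sum, Finset.sum_ite_eq, if_pos heS]
      rw [Finset.sum_congr rfl h1, Finset.sum_add_distrib, ← Finset.sum_mul]
    have cs : (∑ e ∈ S, |t e|) * (∑ e ∈ S, |t e|) ≤ (S.card : ℝ) * Q := by
      have h := Finset.sum_mul_sq_le_sq_mul_sq S (fun _ : Fin n × Fin n => (1:ℝ))
        (fun e => |t e|)
      simp only [one_mul, one_pow, Finset.sum_const, nsmul_eq_mul, mul_one, sq_abs] at h
      calc (∑ e ∈ S, |t e|) * (∑ e ∈ S, |t e|) = (∑ e ∈ S, |t e|)^2 := by ring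
        _ ≤ (S.card : ℝ) * ∑ e ∈ S, (t e)^2 := h
        _ = (S.card : ℝ) * Q := by rw [hQ]
    calc ∑ e ∈ S, ∑ f ∈ S, t e * t f * gval e f
        ≤ ∑ e ∈ S, ∑ f ∈ S, (|t e| * |t f| + if e = f then (t e)^2 else 0) := bound
      _ = (∑ e ∈ S, |t e|) * (∑ e ∈ S, |t e|) + Q := rhs_eq
      _ ≤ (S.card : ℝ) * Q + Q := by linarith
      _ = ((S.card : ℝ) + 1) * Q := by ring
  -- combine
  have key := Finset.sum_mul_sq_le_sq_mul_sq (Finset.univ : Finset (Fin n)) lam v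
  rw [claim1] at key
  have key2 : Q^2 ≤ α * (((S.card : ℝ) + 1) * Q) := by
    calc Q^2 ≤ (∑ i, (lam i)^2) * ∑ x, (v x)^2 := key
      _ = α * ∑ x, (v x)^2 := by rw [hα]
      _ ≤ α * (((S.card : ℝ) + 1) * Q) := by
          apply mul_le_mul_of_nonneg_left claim2 hα0
  show Q ≤ ((S.card : ℝ) + 1) * α
  rcases eq_or_lt_of_le hQ0 with h0 | hpos
  · rw [← h0]; positivity
  · have : Q * Q ≤ (((S.card : ℝ) + 1) * α) * Q := by nlinarith [key2]
    exact le_of_mul_le_mul_right this hpos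

/-! ### Lemma C: weighted LP bound -/

lemma lemmaC {ι : Type*} [DecidableEq ι] (α : ℝ) (hα : 0 ≤ α) (d : ι → ℝ) :
    ∀ (k : ℕ) (Q : Finset ι), Q.card = k → ∀ (w : ι → ℝ) (W : ℝ), 0 ≤ W →
    (∀ e ∈ Q, 0 ≤ w e ∧ w e ≤ W) →
    (∀ S ⊆ Q, ∑ e ∈ S, d e ≤ ((S.card : ℝ) + 1) * α) →
    ∑ e ∈ Q, d e * w e ≤ α * ((∑ e ∈ Q, w e) + W) := by
  intro k
  induction k using Nat.strong_induction_on with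
  | _ k ih =>
    intro Q hcard w W hW hw hd
    rcases Q.eq_empty_or_nonempty with rfl | hne
    · simp only [Finset.sum_empty]
      rw [zero_add]
      positivity
    · obtain ⟨p₁, hp₁, hmin⟩ := Q.exists_min_image w hne
      set mw := w p₁ with hmw
      have hmw0 : 0 ≤ mw := (hw p₁ hp₁).1
      have hmwW : mw ≤ W := (hw p₁ hp₁).2
      set Q' := Q.erase p₁ with hQ'
      have hcard' : Q'.card + 1 = Q.card := Finset.card_erase_add_one hp₁
      have hlt : Q'.card < k := by omega
      have hsub : Q' ⊆ Q := Finset.erase_subset _ _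
      -- apply IH to Q' with weights w - mw, cap W - mw
      have IH : ∑ e ∈ Q', d e * (w e - mw) ≤ α * ((∑ e ∈ Q', (w e - mw)) + (W - mw)) :=
        ih Q'.card hlt Q' rfl (fun e => w e - mw) (W - mw)
        (by linarith)
        (fun e he => ⟨by show (0:ℝ) ≤ w e - mw; have := hmin e (hsub he); linarith,
                      by show w e - mw ≤ W - mw; have := (hw e (hsub he)).2; linarith⟩)
        (fun S hS => hd S (hS.trans hsub))
      -- split the sum
      have split1 : ∑ e ∈ Q, d e * w e
          = mw * (∑ e ∈ Q, d e) + ∑ e ∈ Q, d e * (w e - mw) := by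
        rw [Finset.mul_sum, ← Finset.sum_add_distrib]
        exact Finset.sum_congr rfl fun e _ => by ring
      have split2 : ∑ e ∈ Q, d e * (w e - mw) = ∑ e ∈ Q', d e * (w e - mw) := by
        rw [hQ']
        rw [← Finset.sum_erase_add Q _ hp₁]
        simp [hmw]
      have hdQ : ∑ e ∈ Q, d e ≤ ((Q.card : ℝ) + 1) * α := hd Q subset_rfl
      have hterm1 : mw * (∑ e ∈ Q, d e) ≤ mw * (((Q.card : ℝ) + 1) * α) :=
        mul_le_mul_of_nonneg_left hdQ hmw0
      have sumw' : ∑ e ∈ Q', (w e - mw) = (∑ e ∈ Q', w e) - (Q'.card : ℝ) * mw := by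
        rw [Finset.sum_sub_distrib, Finset.sum_const, nsmul_eq_mul]
      have sumQ : ∑ e ∈ Q, w e = (∑ e ∈ Q', w e) + mw := by
        rw [hQ', ← Finset.sum_erase_add Q _ hp₁]
      have hcast : (Q.card : ℝ) = (Q'.card : ℝ) + 1 := by
        rw [← hcard']; push_cast; ring
      have final : mw * (((Q.card : ℝ) + 1) * α)
          + α * ((∑ e ∈ Q', w e) - (Q'.card : ℝ) * mw + (W - mw))
          = α * ((∑ e ∈ Q, w e) + W) := by
        rw [sumQ, hcast]; ring
      calc ∑ e ∈ Q, d e * w e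
          = mw * (∑ e ∈ Q, d e) + ∑ e ∈ Q', d e * (w e - mw) := by rw [split1, split2]
        _ ≤ mw * (((Q.card : ℝ) + 1) * α)
            + α * ((∑ e ∈ Q', (w e - mw)) + (W - mw)) := by
            have := IH
            linarith
        _ = α * ((∑ e ∈ Q, w e) + W) := by rw [sumw']; exact final

/-! ### Bessel inequality for pairwise-orthogonal matrices -/

lemma bessel {ι : Type*} [DecidableEq ι] (s : Finset ι)
    (Y : ι → Matrix (Fin m) (Fin m) ℝ)
    (horth : ∀ r ∈ s, ∀ t ∈ s, r ≠ t → ip (Y r) (Y t) = 0)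
    (hpos : ∀ r ∈ s, 0 < ip (Y r) (Y r))
    (u : Matrix (Fin m) (Fin m) ℝ) :
    ∑ r ∈ s, (ip u (Y r))^2 / ip (Y r) (Y r) ≤ ip u u := by
  set c : ι → ℝ := fun r => ip u (Y r) / ip (Y r) (Y r) with hc
  set v : Matrix (Fin m) (Fin m) ℝ := ∑ r ∈ s, c r • Y r with hv
  have key : 0 ≤ ip (u - v) (u - v) := ip_self_nonneg _
  have huv : ip u v = ∑ r ∈ s, (ip u (Y r))^2 / ip (Y r) (Y r) := by
    rw [hv, ip_sum_right]
    refine Finset.sum_congr rfl fun r hr => ?_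
    rw [ip_smul_right, hc]
    have h0 : ip (Y r) (Y r) ≠ 0 := ne_of_gt (hpos r hr)
    field_simp
  have hvv : ip v v = ∑ r ∈ s, (ip u (Y r))^2 / ip (Y r) (Y r) := by
    rw [hv, ip_sum_left]
    have hterm : ∀ r ∈ s, ip (c r • Y r) (∑ t ∈ s, c t • Y t)
        = (ip u (Y r))^2 / ip (Y r) (Y r) := by
      intro r hr
      rw [ip_sum_right]
      rw [Finset.sum_eq_single_of_mem r hr]
      · rw [ip_smul_left, ip_smul_right, hc]
        have h0 : ip (Y r) (Y r) ≠ 0 := ne_of_gt (hpos r hr)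
        field_simp
      · intro t hts hne
        rw [ip_smul_left, ip_smul_right, horth r hr t hts (fun h => hne h.symm)]
        ring
    exact Finset.sum_congr rfl hterm
  have expand : ip (u - v) (u - v) = ip u u - 2 * ip u v + ip v v := by
    rw [ip_sub_left, ip_sub_right, ip_sub_right, ip_comm v u]
    ring
  rw [expand, huv, hvv] at key
  linarith

/-! ### Summation over off-diagonal pairs -/

def pairsF (m : ℕ) : Finset (Fin m × Fin m) :=
  Finset.univ.filter (fun e : Fin m × Fin m => e.1 < e.2)

lemma mem_pairsF {e : Fin m × Fin m} : e ∈ pairsF m ↔ e.1 < e.2 := by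
  simp [pairsF]

lemma sum_offdiag_pairs (g : Fin m → Fin m → ℝ) (hdiag : ∀ i, g i i = 0)
    (hsymm : ∀ i j, g i j = g j i) :
    ∑ i, ∑ j, g i j = 2 * ∑ e ∈ pairsF m, g e.1 e.2 := by
  classical
  have h0 : ∑ i, ∑ j, g i j = ∑ e ∈ (Finset.univ ×ˢ Finset.univ : Finset (Fin m × Fin m)), g e.1 e.2 := by
    rw [Finset.sum_product]
  set S0 : Finset (Fin m × Fin m) := Finset.univ ×ˢ Finset.univ with hS0
  have hsplit := Finset.sum_filter_add_sum_filter_not S0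
    (fun e : Fin m × Fin m => e.1 < e.2) (fun e => g e.1 e.2)
  have hsplit2 := Finset.sum_filter_add_sum_filter_not (S0.filter (fun e : Fin m × Fin m => ¬ e.1 < e.2))
    (fun e : Fin m × Fin m => e.2 < e.1) (fun e => g e.1 e.2)
  have hdiag0 : ∑ e ∈ (S0.filter (fun e : Fin m × Fin m => ¬ e.1 < e.2)).filter
      (fun e : Fin m × Fin m => ¬ e.2 < e.1), g e.1 e.2 = 0 := by
    apply Finset.sum_eq_zero
    intro e he
    simp only [Finset.mem_filter] at he
    have : e.1 = e.2 := le_antisymm (not_lt.mp he.2) (not_lt.mp he.1.2)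
    rw [this, hdiag]
  have hgt : ∑ e ∈ (S0.filter (fun e : Fin m × Fin m => ¬ e.1 < e.2)).filter
      (fun e : Fin m × Fin m => e.2 < e.1), g e.1 e.2
      = ∑ e ∈ S0.filter (fun e : Fin m × Fin m => e.1 < e.2), g e.1 e.2 := by
    apply Finset.sum_nbij' (fun e => (e.2, e.1)) (fun e => (e.2, e.1))
    · intro e he
      simp only [Finset.mem_filter, hS0, Finset.mem_product, Finset.mem_univ, true_and] at he ⊢
      exact he.2
    · intro e he
      simp only [Finset.mem_filter, hS0, Finset.mem_product, Finset.mem_univ, true_and] at he ⊢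
      exact ⟨not_lt.mpr (le_of_lt he), he⟩
    · intro e _; rfl
    · intro e _; rfl
    · intro e _
      exact hsymm e.1 e.2
  have hP : S0.filter (fun e : Fin m × Fin m => e.1 < e.2) = pairsF m := by
    simp [pairsF, hS0]
  rw [h0, ← hsplit, ← hsplit2, hdiag0, hgt, hP]
  ring

/-! ### Diagonal commutator computations -/

lemma cm_diagonal_apply (lam : Fin m → ℝ) (Y : Matrix (Fin m) (Fin m) ℝ) (i j : Fin m) :
    cm (Matrix.diagonal lam) Y i j = (lam i - lam j) * Y i j := by
  simp [cm, Matrix.diagonal_mul, Matrix.mul_diagonal, Matrix.sub_apply]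
  ring

lemma frobSq_cm_diagonal (lam : Fin m → ℝ) (Y : Matrix (Fin m) (Fin m) ℝ) :
    frobSq (cm (Matrix.diagonal lam) Y) = ∑ i, ∑ j, (lam i - lam j)^2 * (Y i j)^2 := by
  simp [frobSq, cm_diagonal_apply, mul_pow]

lemma ip_diagonal_self (lam : Fin m → ℝ) :
    ip (Matrix.diagonal lam) (Matrix.diagonal lam) = ∑ i, (lam i)^2 := by
  rw [ip]
  refine Finset.sum_congr rfl fun i _ => ?_
  rw [Finset.sum_eq_single i]
  · simp [Matrix.diagonal_apply_eq, sq]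
  · intro j _ hne
    rw [Matrix.diagonal_apply_ne lam (fun h => hne h.symm)]
    ring
  · intro h; exact absurd (Finset.mem_univ i) h

/-- the symmetric matrix with 1 in positions (e.1,e.2) and (e.2,e.1) -/
def pairMat (e : Fin m × Fin m) : Matrix (Fin m) (Fin m) ℝ :=
  Matrix.of fun a b => (if e.1 = a ∧ e.2 = b then (1:ℝ) else 0)
    + (if e.2 = a ∧ e.1 = b then 1 else 0)

lemma sum_entry (A : Matrix (Fin m) (Fin m) ℝ) (i j : Fin m) :
    ∑ a, ∑ b, A a b * (if i = a ∧ j = b then (1:ℝ) else 0) = A i j := by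
  rw [Finset.sum_eq_single i]
  · rw [Finset.sum_eq_single j]
    · simp
    · intro b _ hbj
      rw [if_neg (by tauto)]; ring
    · intro h; exact absurd (Finset.mem_univ j) h
  · intro a _ hai
    apply Finset.sum_eq_zero
    intro b _
    rw [if_neg (by tauto)]; ring
  · intro h; exact absurd (Finset.mem_univ i) h

lemma ip_pairMat (A : Matrix (Fin m) (Fin m) ℝ) (hA : A.IsSymm) (e : Fin m × Fin m) :
    ip A (pairMat e) = 2 * A e.1 e.2 := by
  have hsym : ∀ a b, A a b = A b a := fun a b => hA.apply b a
  rw [ip]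
  have h : ∀ a b, A a b * pairMat e a b
      = A a b * (if e.1 = a ∧ e.2 = b then (1:ℝ) else 0)
        + A a b * (if e.2 = a ∧ e.1 = b then 1 else 0) := by
    intro a b; rw [pairMat]; simp only [Matrix.of_apply]; ring
  simp_rw [h, Finset.sum_add_distrib]
  rw [sum_entry, sum_entry]
  rw [hsym e.2 e.1]
  ring

lemma pairMat_isSymm (e : Fin m × Fin m) : (pairMat e).IsSymm := by
  unfold Matrix.IsSymm
  ext i j
  simp only [Matrix.transpose_apply, pairMat, Matrix.of_apply]
  rw [add_comm]
  congr 1 <;> (apply if_congr _ rfl rfl; tauto)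

lemma pairMat_apply_self (e : Fin m × Fin m) (hne : e.1 ≠ e.2) :
    pairMat e e.1 e.2 = 1 := by
  simp [pairMat, hne, Ne.symm hne]

lemma ip_pairMat_self (e : Fin m × Fin m) (hne : e.1 ≠ e.2) :
    ip (pairMat e) (pairMat e) = 2 := by
  rw [ip_pairMat _ (pairMat_isSymm e) e, pairMat_apply_self e hne]
  norm_num

/-! ### The Row Lemma -/

lemma isSymm_conj (U Y : Matrix (Fin m) (Fin m) ℝ) (hY : Y.IsSymm) :
    (Uᵀ * Y * U).IsSymm := by
  unfold Matrix.IsSymm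
  rw [Matrix.transpose_mul, Matrix.transpose_mul, Matrix.transpose_transpose,
    hY.eq, Matrix.mul_assoc]

lemma row_lemma {ι : Type*} [DecidableEq ι] (X : Matrix (Fin m) (Fin m) ℝ)
    (hX : X.IsSymm) (s : Finset ι) (Y : ι → Matrix (Fin m) (Fin m) ℝ)
    (hYsymm : ∀ r ∈ s, (Y r).IsSymm)
    (horth : ∀ r ∈ s, ∀ t ∈ s, r ≠ t → ip (Y r) (Y t) = 0)
    (hpos : ∀ r ∈ s, 0 < ip (Y r) (Y r))
    (W : ℝ) (hW0 : 0 ≤ W) (hW : ∀ r ∈ s, ip (Y r) (Y r) ≤ W) :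
    ∑ r ∈ s, frobSq (cm X (Y r)) ≤ ip X X * ((∑ r ∈ s, ip (Y r) (Y r)) + W) := by
  classical
  obtain ⟨U, lam, hUtU, hUUt, hXeq⟩ := exists_diag X hX
  set D := Matrix.diagonal lam with hD
  set Z : ι → Matrix (Fin m) (Fin m) ℝ := fun r => Uᵀ * Y r * U with hZdef
  have hZform : ∀ r, Z r = Uᵀ * Y r * (Uᵀ)ᵀ := by
    intro r; rw [hZdef]; simp [Matrix.transpose_transpose]
  have hYZ : ∀ r, Y r = U * Z r * Uᵀ := by
    intro r
    rw [hZdef]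
    simp only
    simp only [Matrix.mul_assoc]
    rw [hUUt, Matrix.mul_one, ← Matrix.mul_assoc, hUUt, Matrix.one_mul]
  have hipZ : ∀ r t, ip (Z r) (Z t) = ip (Y r) (Y t) := by
    intro r t
    rw [hZform r, hZform t]
    exact ip_conj (Uᵀ) (Y r) (Y t) (by rw [Matrix.transpose_transpose]; exact hUUt)
  have hZsymm : ∀ r ∈ s, (Z r).IsSymm := fun r hr => isSymm_conj U (Y r) (hYsymm r hr)
  have hfrob : ∀ r, frobSq (cm X (Y r)) = frobSq (cm D (Z r)) := by
    intro r
    rw [hXeq, hYZ r, cm_conj U D (Z r) hUtU, frobSq_eq_ip, frobSq_eq_ip]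
    exact ip_conj U _ _ hUtU
  have hXX : ip X X = ∑ i, (lam i)^2 := by
    rw [hXeq]
    rw [ip_conj U D D hUtU, hD, ip_diagonal_self]
  -- weight function on pairs
  set w : Fin m × Fin m → ℝ := fun e => ∑ r ∈ s, 2 * (Z r e.1 e.2)^2 with hwdef
  set d : Fin m × Fin m → ℝ := fun e => (lam e.1 - lam e.2)^2 with hddef
  set α : ℝ := ∑ i, (lam i)^2 with hαdef
  have hα0 : 0 ≤ α := Finset.sum_nonneg fun i _ => sq_nonneg _
  -- main sum identity
  have main_eq : ∑ r ∈ s, frobSq (cm X (Y r)) = ∑ e ∈ pairsF m, d e * w e := by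
    have h1 : ∀ r ∈ s, frobSq (cm X (Y r))
        = ∑ e ∈ pairsF m, d e * (2 * (Z r e.1 e.2)^2) := by
      intro r hr
      rw [hfrob r, hD, frobSq_cm_diagonal]
      have hg := sum_offdiag_pairs (fun i j => (lam i - lam j)^2 * (Z r i j)^2)
        (fun i => by show (lam i - lam i)^2 * (Z r i i)^2 = 0; ring)
        (fun i j => by
          show (lam i - lam j)^2 * (Z r i j)^2 = (lam j - lam i)^2 * (Z r j i)^2
          rw [(hZsymm r hr).apply i j]
          ring)
      rw [hg, Finset.mul_sum]
      exact Finset.sum_congr rfl fun e _ => by rw [hddef]; ring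
    rw [Finset.sum_congr rfl h1, Finset.sum_comm]
    refine Finset.sum_congr rfl fun e _ => ?_
    rw [hwdef, Finset.mul_sum]
  -- bounds on w
  have hw_bounds : ∀ e ∈ pairsF m, 0 ≤ w e ∧ w e ≤ W := by
    intro e he
    have hne : e.1 ≠ e.2 := ne_of_lt (mem_pairsF.mp he)
    constructor
    · apply Finset.sum_nonneg; intro r _; positivity
    · -- Bessel
      have hipZZ : ∀ r ∈ s, 0 < ip (Z r) (Z r) := by
        intro r hr; rw [hipZ r r]; exact hpos r hr
      have hbes := bessel s Z
        (fun r hr t ht hrt => by rw [hipZ r t]; exact horth r hr t ht hrt)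
        hipZZ (pairMat e)
      rw [ip_pairMat_self e hne] at hbes
      have hterm : ∀ r ∈ s, (ip (pairMat e) (Z r))^2 / ip (Z r) (Z r)
          = 4 * (Z r e.1 e.2)^2 / ip (Z r) (Z r) := by
        intro r hr
        rw [ip_comm, ip_pairMat (Z r) (hZsymm r hr) e]
        ring_nf
      rw [Finset.sum_congr rfl hterm] at hbes
      -- w e = sum over r of 2 Z², bound each by W * (2 Z²/ip)
      have hstep : ∀ r ∈ s, 2 * (Z r e.1 e.2)^2
          ≤ W * (2 * (Z r e.1 e.2)^2 / ip (Z r) (Z r)) := by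
        intro r hr
        have h1 : 0 < ip (Z r) (Z r) := hipZZ r hr
        have h2 : ip (Z r) (Z r) ≤ W := by rw [hipZ r r]; exact hW r hr
        have h3 : 2 * (Z r e.1 e.2)^2 = ip (Z r) (Z r) * (2 * (Z r e.1 e.2)^2 / ip (Z r) (Z r)) := by
          field_simp
        conv_lhs => rw [h3]
        apply mul_le_mul_of_nonneg_right h2
        positivity
      calc w e = ∑ r ∈ s, 2 * (Z r e.1 e.2)^2 := by rw [hwdef]
        _ ≤ ∑ r ∈ s, W * (2 * (Z r e.1 e.2)^2 / ip (Z r) (Z r)) :=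
            Finset.sum_le_sum hstep
        _ = (W / 2) * ∑ r ∈ s, 4 * (Z r e.1 e.2)^2 / ip (Z r) (Z r) := by
            rw [Finset.mul_sum]
            exact Finset.sum_congr rfl fun r _ => by ring
        _ ≤ (W / 2) * 2 := by
            apply mul_le_mul_of_nonneg_left hbes
            linarith
        _ = W := by ring
  -- total weight bound
  have hw_total : ∑ e ∈ pairsF m, w e ≤ ∑ r ∈ s, ip (Y r) (Y r) := by
    have h1 : ∑ e ∈ pairsF m, w e = ∑ r ∈ s, ∑ e ∈ pairsF m, 2 * (Z r e.1 e.2)^2 := by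
      rw [hwdef, Finset.sum_comm]
    rw [h1]
    apply Finset.sum_le_sum
    intro r hr
    have hg := sum_offdiag_pairs (fun i j => if i = j then 0 else (Z r i j)^2)
      (fun i => by simp)
      (fun i j => by
        show (if i = j then (0:ℝ) else (Z r i j)^2) = (if j = i then 0 else (Z r j i)^2)
        by_cases hij : i = j
        · subst hij; rfl
        · rw [if_neg hij, if_neg (fun h => hij h.symm), (hZsymm r hr).apply i j])
    have h2 : ∑ e ∈ pairsF m, 2 * (Z r e.1 e.2)^2
        = ∑ i, ∑ j, (if i = j then 0 else (Z r i j)^2) := by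
      rw [hg, Finset.mul_sum]
      refine Finset.sum_congr rfl fun e he => ?_
      have hne : e.1 ≠ e.2 := ne_of_lt (mem_pairsF.mp he)
      show 2 * (Z r e.1 e.2)^2 = 2 * (if e.1 = e.2 then (0:ℝ) else (Z r e.1 e.2)^2)
      rw [if_neg hne]
    rw [h2, ← hipZ r r]
    show _ ≤ ∑ i, ∑ j, Z r i j * Z r i j
    apply Finset.sum_le_sum
    intro i _
    apply Finset.sum_le_sum
    intro j _
    by_cases hij : i = j
    · rw [if_pos hij]; exact mul_self_nonneg _
    · rw [if_neg hij, sq]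
  -- apply Lemma C
  have hd_cond : ∀ S ⊆ pairsF m, ∑ e ∈ S, d e ≤ ((S.card : ℝ) + 1) * α := by
    intro S hS
    exact lemmaA lam S (fun e he => mem_pairsF.mp (hS he))
  have hC := lemmaC α hα0 d (pairsF m).card (pairsF m) rfl w W hW0 hw_bounds hd_cond
  rw [main_eq, hXX]
  calc ∑ e ∈ pairsF m, d e * w e ≤ α * ((∑ e ∈ pairsF m, w e) + W) := hC
    _ ≤ α * ((∑ r ∈ s, ip (Y r) (Y r)) + W) := by
        apply mul_le_mul_of_nonneg_left _ hα0
        linarith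

/-! ### small helpers -/

lemma frobSq_zero : frobSq (0 : Matrix (Fin m) (Fin m) ℝ) = 0 := by simp [frobSq]

lemma frobSq_nonneg (A : Matrix (Fin m) (Fin m) ℝ) : 0 ≤ frobSq A := by
  rw [frobSq_eq_ip]; exact ip_self_nonneg A

lemma cm_zero_left (Y : Matrix (Fin m) (Fin m) ℝ) : cm 0 Y = 0 := by simp [cm]

lemma cm_zero_right (Y : Matrix (Fin m) (Fin m) ℝ) : cm Y 0 = 0 := by simp [cm]

lemma cm_self (Y : Matrix (Fin m) (Fin m) ℝ) : cm Y Y = 0 := by simp [cm]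

lemma frobSq_neg (A : Matrix (Fin m) (Fin m) ℝ) : frobSq (-A) = frobSq A := by
  simp [frobSq]

lemma frobSq_cm_comm (X Y : Matrix (Fin m) (Fin m) ℝ) :
    frobSq (cm X Y) = frobSq (cm Y X) := by
  rw [cm_skew, frobSq_neg]

lemma frobSq_smul (c : ℝ) (A : Matrix (Fin m) (Fin m) ℝ) :
    frobSq (c • A) = c^2 * frobSq A := by
  simp [frobSq, Finset.mul_sum, mul_pow]

lemma isSymm_smul (c : ℝ) (A : Matrix (Fin m) (Fin m) ℝ) (hA : A.IsSymm) :
    (c • A).IsSymm := by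
  unfold Matrix.IsSymm
  rw [Matrix.transpose_smul, hA.eq]

lemma frobSq_cm_smul (c e : ℝ) (X Y : Matrix (Fin m) (Fin m) ℝ) :
    frobSq (cm (c • X) (e • Y)) = c^2 * e^2 * frobSq (cm X Y) := by
  rw [cm_smul, frobSq_smul]
  ring

/-! ### quadratic form expansion on the simplex -/

lemma phi_expand {p : ℕ} (N : Fin p → Fin p → ℝ) (hNsymm : ∀ r t, N r t = N t r)
    (b v : Fin p → ℝ) (ε : ℝ) :
    (∑ r, ∑ t, N r t * ((b r + ε * v r) * (b t + ε * v t)))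
      = (∑ r, ∑ t, N r t * (b r * b t))
        + (2 * ε) * (∑ r, ∑ t, N r t * (v r * b t))
        + ε^2 * (∑ r, ∑ t, N r t * (v r * v t)) := by
  have hterm : ∀ r t, N r t * ((b r + ε * v r) * (b t + ε * v t))
      = N r t * (b r * b t) + ε * (N r t * (v r * b t)) + ε * (N r t * (b r * v t))
        + ε^2 * (N r t * (v r * v t)) := by
    intro r t; ring
  simp_rw [hterm, Finset.sum_add_distrib, ← Finset.mul_sum]
  have hswap : ∑ r, ∑ t, N r t * (b r * v t) = ∑ r, ∑ t, N r t * (v r * b t) := by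
    rw [Finset.sum_comm]
    refine Finset.sum_congr rfl fun r _ => Finset.sum_congr rfl fun t _ => ?_
    rw [hNsymm t r]
    ring
  rw [hswap]
  ring

lemma sum_indicator_diff {p : ℕ} (r₁ t₁ : Fin p) (g : Fin p → ℝ) :
    ∑ r, ((if r₁ = r then (1:ℝ) else 0) - (if t₁ = r then 1 else 0)) * g r
      = g r₁ - g t₁ := by
  have h : ∀ r, ((if r₁ = r then (1:ℝ) else 0) - (if t₁ = r then 1 else 0)) * g r
      = (if r₁ = r then g r else 0) - (if t₁ = r then g r else 0) := by
    intro r; split_ifs <;> ring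
  simp_rw [h, Finset.sum_sub_distrib, Finset.sum_ite_eq, Finset.mem_univ, if_true]

/-! ### simplex maximization -/

lemma simplex_max {p : ℕ} (hp : 0 < p) (N : Fin p → Fin p → ℝ)
    (hNsymm : ∀ r t, N r t = N t r) :
    ∃ b : Fin p → ℝ, (∀ r, 0 ≤ b r) ∧ (∑ r, b r = 1) ∧
      (∀ x : Fin p → ℝ, (∀ r, 0 ≤ x r) → (∑ r, x r = 1) →
        ∑ r, ∑ t, N r t * (x r * x t) ≤ ∑ r, ∑ t, N r t * (b r * b t)) ∧
      (∀ r t, 0 < b t → (∑ u, N r u * b u) ≤ (∑ u, N t u * b u)) := by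
  classical
  set φ : (Fin p → ℝ) → ℝ := fun x => ∑ r, ∑ t, N r t * (x r * x t) with hφ
  set Δ : Set (Fin p → ℝ) := {x | (∀ r, 0 ≤ x r) ∧ ∑ r, x r = 1} with hΔ
  have hclosed : IsClosed Δ := by
    have h1 : IsClosed {x : Fin p → ℝ | ∀ r, 0 ≤ x r} := by
      have he : {x : Fin p → ℝ | ∀ r, 0 ≤ x r} = ⋂ r, {x | 0 ≤ x r} := by
        ext x; simp [Set.mem_iInter]
      rw [he]
      exact isClosed_iInter fun r => isClosed_le continuous_const (continuous_apply r)
    have h2 : IsClosed {x : Fin p → ℝ | ∑ r, x r = 1} :=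
      isClosed_eq (continuous_finset_sum _ fun r _ => continuous_apply r) continuous_const
    have he : Δ = {x : Fin p → ℝ | ∀ r, 0 ≤ x r} ∩ {x : Fin p → ℝ | ∑ r, x r = 1} := by
      ext x; simp [hΔ, Set.mem_setOf_eq, Set.mem_inter_iff]
    rw [he]
    exact h1.inter h2
  have hsubset : Δ ⊆ Set.pi Set.univ (fun _ : Fin p => Set.Icc (0:ℝ) 1) := by
    intro x hx r _
    refine ⟨hx.1 r, ?_⟩
    calc x r ≤ ∑ u, x u := Finset.single_le_sum (fun u _ => hx.1 u) (Finset.mem_univ r)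
      _ = 1 := hx.2
  have hcompact : IsCompact Δ :=
    (isCompact_univ_pi fun _ => isCompact_Icc).of_isClosed_subset hclosed hsubset
  have hr₀ : Nonempty (Fin p) := ⟨⟨0, hp⟩⟩
  obtain ⟨r₀⟩ := hr₀
  have hne : Δ.Nonempty := by
    refine ⟨fun u => if r₀ = u then 1 else 0, fun u => ?_, ?_⟩
    · show (0:ℝ) ≤ if r₀ = u then 1 else 0
      split_ifs <;> norm_num
    · rw [Finset.sum_ite_eq]; simp
  have hcont : Continuous φ := by
    apply continuous_finset_sum
    intro r _
    apply continuous_finset_sum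
    intro t _
    exact continuous_const.mul ((continuous_apply r).mul (continuous_apply t))
  obtain ⟨b, hbΔ, hbmax'⟩ := hcompact.exists_isMaxOn hne hcont.continuousOn
  have hbmax : ∀ x ∈ Δ, φ x ≤ φ b := fun x hx => hbmax' hx
  obtain ⟨hb0, hb1⟩ := hbΔ
  refine ⟨b, hb0, hb1, fun x hx1 hx2 => hbmax x ⟨hx1, hx2⟩, ?_⟩
  -- first-order condition
  intro r t hbt
  by_cases hrt : r = t
  · subst hrt; exact le_refl _
  by_contra hD'
  push_neg at hD'
  set g : Fin p → ℝ := fun u => ∑ w, N u w * b w with hg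
  have hDpos : 0 < g r - g t := by
    simp only [hg]
    linarith
  set D : ℝ := g r - g t with hDdef
  set v : Fin p → ℝ := fun u => (if r = u then (1:ℝ) else 0) - (if t = u then 1 else 0) with hv
  set C : ℝ := ∑ r', ∑ t', N r' t' * (v r' * v t') with hC
  have habs : (0:ℝ) < |C| + 1 := by positivity
  set ε : ℝ := min (b t) (D / (|C| + 1)) with hε
  have hε1 : 0 < ε := lt_min hbt (by positivity)
  have hε2 : ε ≤ b t := min_le_left _ _
  have hε3 : ε ≤ D / (|C| + 1) := min_le_right _ _
  -- the perturbed point is in the simplex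
  have hx1 : ∀ u, 0 ≤ b u + ε * v u := by
    intro u
    by_cases hru : r = u
    · subst hru
      have hvr : v r = 1 := by
        show (if r = r then (1:ℝ) else 0) - (if t = r then 1 else 0) = 1
        rw [if_pos rfl, if_neg (fun h => hrt h.symm)]
        norm_num
      rw [hvr]
      have := hb0 r
      linarith
    · by_cases htu : t = u
      · subst htu
        have hvt : v t = -1 := by
          show (if r = t then (1:ℝ) else 0) - (if t = t then 1 else 0) = -1
          rw [if_neg hrt, if_pos rfl]
          norm_num
        rw [hvt]
        linarith
      · have hvu : v u = 0 := by
          show (if r = u then (1:ℝ) else 0) - (if t = u then 1 else 0) = 0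
          rw [if_neg hru, if_neg htu]
          norm_num
        rw [hvu]
        have := hb0 u
        linarith
  have hx2 : ∑ u, (b u + ε * v u) = 1 := by
    rw [Finset.sum_add_distrib, hb1, ← Finset.mul_sum]
    have hvsum : ∑ u, v u = 0 := by
      have : ∀ u, v u = (if r = u then (1:ℝ) else 0) - (if t = u then 1 else 0) :=
        fun u => rfl
      simp_rw [this]
      rw [Finset.sum_sub_distrib, Finset.sum_ite_eq, Finset.sum_ite_eq]
      simp
    rw [hvsum]
    ring
  have hineq : (∑ r', ∑ t', N r' t' * ((b r' + ε * v r') * (b t' + ε * v t')))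
      ≤ ∑ r', ∑ t', N r' t' * (b r' * b t') :=
    hbmax (fun u => b u + ε * v u) ⟨hx1, hx2⟩
  rw [phi_expand N hNsymm b v ε] at hineq
  have hmid : ∑ r', ∑ t', N r' t' * (v r' * b t') = D := by
    have h1 : ∀ r', ∑ t', N r' t' * (v r' * b t') = v r' * g r' := by
      intro r'
      rw [hg]
      simp only
      rw [Finset.mul_sum]
      exact Finset.sum_congr rfl fun w _ => by ring
    simp_rw [h1]
    have h2 : ∀ r', v r' * g r'
        = ((if r = r' then (1:ℝ) else 0) - (if t = r' then 1 else 0)) * g r' := by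
      intro r'; rfl
    simp_rw [h2]
    rw [sum_indicator_diff r t g]
  rw [hmid] at hineq
  -- derive contradiction
  have key : 2 * ε * D + ε^2 * C ≤ 0 := by linarith
  have h3 : ε * (|C| + 1) ≤ D := (le_div_iff₀ habs).mp hε3
  have h4 : ε^2 * (-|C|) ≤ ε^2 * C :=
    mul_le_mul_of_nonneg_left (neg_abs_le C) (sq_nonneg ε)
  have h5 : ε * (ε * |C|) ≤ ε * (D - ε) := by
    apply mul_le_mul_of_nonneg_left _ hε1.le
    nlinarith [abs_nonneg C]
  have hεD : 0 < ε * D := mul_pos hε1 hDpos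
  nlinarith [sq_nonneg ε, key, h4, h5, hεD]

/-! ### DDVV for pairwise orthogonal families -/

theorem orth_family {p : ℕ} (B : Fin p → Matrix (Fin m) (Fin m) ℝ)
    (hsymm : ∀ r, (B r).IsSymm)
    (horth : ∀ r t, r ≠ t → ip (B r) (B t) = 0) :
    ∑ r, ∑ t, frobSq (cm (B r) (B t)) ≤ (∑ r, frobSq (B r))^2 := by
  classical
  rcases Nat.eq_zero_or_pos p with hp | hp
  · subst hp
    simp
  set a : Fin p → ℝ := fun r => frobSq (B r) with ha
  have ha0 : ∀ r, 0 ≤ a r := fun r => frobSq_nonneg _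
  set S : ℝ := ∑ r, a r with hSdef
  have hS0 : 0 ≤ S := Finset.sum_nonneg fun r _ => ha0 r
  have hazero : ∀ r, a r = 0 → B r = 0 := fun r h =>
    ip_self_eq_zero (by rw [← frobSq_eq_ip]; exact h)
  have hRHS : (∑ r, frobSq (B r))^2 = S^2 := by rw [hSdef]
  rcases eq_or_lt_of_le hS0 with hSzero | hSpos
  · -- degenerate : everything zero
    have hz : ∀ r t, frobSq (cm (B r) (B t)) = 0 := by
      intro r t
      have har : a r = 0 :=
        (Finset.sum_eq_zero_iff_of_nonneg (fun r _ => ha0 r)).mp hSzero.symm r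
          (Finset.mem_univ r)
      rw [hazero r har, cm_zero_left, frobSq_zero]
    calc ∑ r, ∑ t, frobSq (cm (B r) (B t)) = 0 := by
          apply Finset.sum_eq_zero; intro r _
          apply Finset.sum_eq_zero; intro t _
          exact hz r t
      _ ≤ (∑ r, frobSq (B r))^2 := sq_nonneg _
  -- main case : S > 0
  set N : Fin p → Fin p → ℝ := fun r t =>
    if a r = 0 ∨ a t = 0 then 0 else frobSq (cm (B r) (B t)) / (a r * a t) with hN
  have hNval0 : ∀ r t, (a r = 0 ∨ a t = 0) → N r t = 0 := by
    intro r t h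
    show (if a r = 0 ∨ a t = 0 then (0:ℝ)
      else frobSq (cm (B r) (B t)) / (a r * a t)) = 0
    rw [if_pos h]
  have hNval : ∀ r t, ¬(a r = 0 ∨ a t = 0) →
      N r t = frobSq (cm (B r) (B t)) / (a r * a t) := by
    intro r t h
    show (if a r = 0 ∨ a t = 0 then (0:ℝ)
      else frobSq (cm (B r) (B t)) / (a r * a t)) = _
    rw [if_neg h]
  have hM_eq : ∀ r t, frobSq (cm (B r) (B t)) = N r t * (a r * a t) := by
    intro r t
    by_cases h : a r = 0 ∨ a t = 0
    · rw [hNval0 r t h, zero_mul]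
      rcases h with h | h
      · rw [hazero r h, cm_zero_left, frobSq_zero]
      · rw [hazero t h, cm_zero_right, frobSq_zero]
    · rw [hNval r t h]
      push_neg at h
      rw [div_mul_cancel₀ _ (mul_ne_zero h.1 h.2)]
  have hNsymm : ∀ r t, N r t = N t r := by
    intro r t
    by_cases h : a r = 0 ∨ a t = 0
    · rw [hNval0 r t h, hNval0 t r (Or.symm h)]
    · rw [hNval r t h, hNval t r (fun hc => h (Or.symm hc)), frobSq_cm_comm, mul_comm]
  obtain ⟨b, hb0, hb1, hbmax, hbfo⟩ := simplex_max hp N hNsymm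
  set g : Fin p → ℝ := fun u => ∑ w, N u w * b w with hg
  set phib : ℝ := ∑ r, ∑ t, N r t * (b r * b t) with hphib
  have hphib_g : phib = ∑ r, b r * g r := by
    rw [hphib]
    refine Finset.sum_congr rfl fun r _ => ?_
    rw [hg]
    show ∑ t, N r t * (b r * b t) = b r * ∑ w, N r w * b w
    rw [Finset.mul_sum]
    exact Finset.sum_congr rfl fun t _ => by ring
  -- get the weight-maximizing index
  obtain ⟨rs, _, hrs⟩ := Finset.exists_max_image Finset.univ b ⟨⟨0, hp⟩, Finset.mem_univ _⟩
  have hrspos : 0 < b rs := by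
    by_contra hneg
    push_neg at hneg
    have hble : ∀ u, b u ≤ 0 := fun u => le_trans (hrs u (Finset.mem_univ u)) hneg
    have : (1:ℝ) ≤ 0 := by
      rw [← hb1]
      exact Finset.sum_nonpos fun u _ => hble u
    linarith
  -- we show phib ≤ 1 in both cases
  have hphible : phib ≤ 1 := by
    by_cases hcase : ∃ u, 0 < b u ∧ a u = 0
    · -- degenerate support
      obtain ⟨u, hbu, hau⟩ := hcase
      have hgu : g u = 0 := by
        rw [hg]
        show ∑ w, N u w * b w = 0
        apply Finset.sum_eq_zero
        intro w _
        rw [hNval0 u w (Or.inl hau)]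
        ring
      have hgle : ∀ r, g r ≤ 0 := by
        intro r
        have := hbfo r u hbu
        rw [hg] at hgu ⊢
        calc (∑ w, N r w * b w) ≤ ∑ w, N u w * b w := this
          _ = 0 := hgu
      rw [hphib_g]
      have : ∑ r, b r * g r ≤ 0 :=
        Finset.sum_nonpos fun r _ => mul_nonpos_of_nonneg_of_nonpos (hb0 r) (hgle r)
      linarith
    · -- positive support case : apply the row lemma
      push_neg at hcase
      have hapos : ∀ u, 0 < b u → 0 < a u := fun u hu =>
        lt_of_le_of_ne (ha0 u) (Ne.symm (hcase u hu))
      have harspos : 0 < a rs := hapos rs hrspos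
      set σ : Finset (Fin p) := Finset.univ.filter (fun u => 0 < b u) with hσ
      have hrsσ : rs ∈ σ := by rw [hσ]; simp [hrspos]
      set σ' : Finset (Fin p) := σ.erase rs with hσ'
      set Y : Fin p → Matrix (Fin m) (Fin m) ℝ :=
        fun u => Real.sqrt (b u / a u) • B u with hY
      have hipB : ∀ u, ip (B u) (B u) = a u := fun u => (frobSq_eq_ip (B u)).symm
      have hipY : ∀ u, 0 < b u → ip (Y u) (Y u) = b u := by
        intro u hu
        have hau : 0 < a u := hapos u hu
        show ip (Real.sqrt (b u / a u) • B u) (Real.sqrt (b u / a u) • B u) = b u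
        rw [ip_smul_left, ip_smul_right, ← mul_assoc,
          Real.mul_self_sqrt (by positivity : (0:ℝ) ≤ b u / a u), hipB u]
        exact div_mul_cancel₀ _ (ne_of_gt hau)
      have hbposσ' : ∀ u ∈ σ', 0 < b u := by
        intro u hu
        have := Finset.mem_of_mem_erase hu
        rw [hσ] at this
        exact (Finset.mem_filter.mp this).2
      -- row lemma
      have hrow := row_lemma (Y rs) (isSymm_smul _ _ (hsymm rs)) σ' Y
        (fun u _ => isSymm_smul _ _ (hsymm u))
        (fun u _ w _ huw => by
          show ip (Real.sqrt (b u / a u) • B u) (Real.sqrt (b w / a w) • B w) = 0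
          rw [ip_smul_left, ip_smul_right, horth u w huw]
          ring)
        (fun u hu => by rw [hipY u (hbposσ' u hu)]; exact hbposσ' u hu)
        (b rs) hrspos.le
        (fun u hu => by rw [hipY u (hbposσ' u hu)]; exact hrs u (Finset.mem_univ u))
      rw [hipY rs hrspos] at hrow
      have hsumY : ∑ u ∈ σ', ip (Y u) (Y u) = ∑ u ∈ σ', b u :=
        Finset.sum_congr rfl fun u hu => hipY u (hbposσ' u hu)
      rw [hsumY] at hrow
      -- total weight in the support is 1
      have hsumσ : ∑ u ∈ σ, b u = 1 := by
        rw [← hb1]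
        apply Finset.sum_subset (Finset.filter_subset _ _)
        intro u _ hu
        simp only [Finset.mem_filter, Finset.mem_univ, true_and, not_lt] at hu
        exact le_antisymm hu (hb0 u)
      have hsum1 : (∑ u ∈ σ', b u) + b rs = 1 := by
        rw [hσ', Finset.sum_erase_add σ b hrsσ, hsumσ]
      -- identify the row-lemma LHS with b rs * g rs
      have hterm : ∀ u ∈ σ', frobSq (cm (Y rs) (Y u)) = b rs * (N rs u * b u) := by
        intro u hu
        have hbu : 0 < b u := hbposσ' u hu
        have hau : 0 < a u := hapos u hbu
        show frobSq (cm (Real.sqrt (b rs / a rs) • B rs)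
          (Real.sqrt (b u / a u) • B u)) = b rs * (N rs u * b u)
        rw [frobSq_cm_smul,
          Real.sq_sqrt (by positivity : (0:ℝ) ≤ b rs / a rs),
          Real.sq_sqrt (by positivity : (0:ℝ) ≤ b u / a u),
          hM_eq rs u]
        field_simp
      have hNrs_diag : N rs rs = 0 := by
        rw [hNval rs rs (by push_neg; exact ⟨ne_of_gt harspos, ne_of_gt harspos⟩)]
        rw [cm_self, frobSq_zero, zero_div]
      have hgrs : b rs * g rs = ∑ u ∈ σ', frobSq (cm (Y rs) (Y u)) := by
        have h1 : b rs * g rs = ∑ w, b rs * (N rs w * b w) := by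
          rw [hg]
          show b rs * (∑ w, N rs w * b w) = _
          rw [Finset.mul_sum]
        have h2 : ∑ w, b rs * (N rs w * b w) = ∑ w ∈ σ, b rs * (N rs w * b w) := by
          symm
          apply Finset.sum_subset (Finset.filter_subset _ _)
          intro u _ hu
          simp only [Finset.mem_filter, Finset.mem_univ, true_and, not_lt] at hu
          have hbu0 : b u = 0 := le_antisymm hu (hb0 u)
          rw [hbu0]
          ring
        have h3 : ∑ w ∈ σ, b rs * (N rs w * b w)
            = (∑ w ∈ σ', b rs * (N rs w * b w)) + b rs * (N rs rs * b rs) := by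
          rw [hσ', Finset.sum_erase_add σ _ hrsσ]
        rw [h1, h2, h3, hNrs_diag]
        rw [Finset.sum_congr rfl hterm]
        ring
      -- conclude g rs ≤ 1
      have hgrs_le : g rs ≤ 1 := by
        have h4 : b rs * g rs ≤ b rs * ((∑ u ∈ σ', b u) + b rs) := by
          rw [hgrs]; exact hrow
        rw [hsum1, mul_one] at h4
        by_contra hgt
        push_neg at hgt
        nlinarith [h4, hrspos, hgt]
      -- phib ≤ g rs
      have hphig : phib ≤ g rs := by
        rw [hphib_g]
        calc ∑ r, b r * g r ≤ ∑ r, b r * g rs :=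
              Finset.sum_le_sum fun r _ =>
                mul_le_mul_of_nonneg_left (hbfo r rs hrspos) (hb0 r)
          _ = g rs := by rw [← Finset.sum_mul, hb1, one_mul]
      linarith
  -- conclude
  have hST : S ≠ 0 := ne_of_gt hSpos
  have hxhat : ∀ r, 0 ≤ a r / S := fun r => div_nonneg (ha0 r) hS0
  have hxsum : ∑ r, a r / S = 1 := by
    rw [← Finset.sum_div, ← hSdef, div_self hST]
  have hmax_applied := hbmax (fun r => a r / S) hxhat hxsum
  have hLHS_eq : ∑ r, ∑ t, frobSq (cm (B r) (B t))
      = S^2 * ∑ r, ∑ t, N r t * ((a r / S) * (a t / S)) := by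
    rw [Finset.mul_sum]
    refine Finset.sum_congr rfl fun r _ => ?_
    rw [Finset.mul_sum]
    refine Finset.sum_congr rfl fun t _ => ?_
    rw [hM_eq r t]
    field_simp
  rw [hLHS_eq, hRHS]
  calc S^2 * ∑ r, ∑ t, N r t * ((a r / S) * (a t / S))
      ≤ S^2 * phib := by
        apply mul_le_mul_of_nonneg_left _ (sq_nonneg S)
        rw [hphib]
        exact hmax_applied
    _ ≤ S^2 * 1 := mul_le_mul_of_nonneg_left hphible (sq_nonneg S)
    _ = S^2 := by ring

/-! ### rotation invariance -/

lemma ip_sum_smul {ι : Type*} (s : Finset ι) (c : ι → ℝ)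
    (M : ι → Matrix (Fin m) (Fin m) ℝ) (Z : Matrix (Fin m) (Fin m) ℝ) :
    ip (∑ r ∈ s, c r • M r) Z = ∑ r ∈ s, c r * ip (M r) Z := by
  rw [ip_sum_left]
  exact Finset.sum_congr rfl fun r _ => ip_smul_left _ _ _

lemma ip_sum_smul_right {ι : Type*} (s : Finset ι) (c : ι → ℝ)
    (M : ι → Matrix (Fin m) (Fin m) ℝ) (Z : Matrix (Fin m) (Fin m) ℝ) :
    ip Z (∑ r ∈ s, c r • M r) = ∑ r ∈ s, c r * ip Z (M r) := by
  rw [ip_sum_right]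
  exact Finset.sum_congr rfl fun r _ => ip_smul_right _ _ _

lemma rotate_invariance {q : ℕ} (U : Matrix (Fin q) (Fin q) ℝ) (hUUt : U * Uᵀ = 1)
    (M : Fin q → Matrix (Fin m) (Fin m) ℝ) :
    ∑ k, ip (∑ r, U r k • M r) (∑ r, U r k • M r) = ∑ r, ip (M r) (M r) := by
  have hdelta : ∀ r r', ∑ k, U r k * U r' k = if r = r' then (1:ℝ) else 0 := by
    intro r r'
    have h1 : (U * Uᵀ) r r' = ∑ k, U r k * U r' k := by
      rw [Matrix.mul_apply]
      exact Finset.sum_congr rfl fun k _ => by rw [Matrix.transpose_apply]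
    rw [← h1, hUUt, Matrix.one_apply]
  have hexp : ∀ k, ip (∑ r, U r k • M r) (∑ r, U r k • M r)
      = ∑ r, ∑ r', (U r k * U r' k) * ip (M r) (M r') := by
    intro k
    rw [ip_sum_smul]
    refine Finset.sum_congr rfl fun r _ => ?_
    rw [ip_sum_smul_right, Finset.mul_sum]
    exact Finset.sum_congr rfl fun r' _ => by ring
  simp_rw [hexp]
  rw [Finset.sum_comm]
  have hswap : ∀ r, ∑ k, ∑ r', (U r k * U r' k) * ip (M r) (M r')
      = ∑ r', (∑ k, U r k * U r' k) * ip (M r) (M r') := by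
    intro r
    rw [Finset.sum_comm]
    exact Finset.sum_congr rfl fun r' _ => by rw [Finset.sum_mul]
  simp_rw [hswap, hdelta]
  refine Finset.sum_congr rfl fun r _ => ?_
  have h : ∀ r', (if r = r' then (1:ℝ) else 0) * ip (M r) (M r')
      = if r = r' then ip (M r) (M r') else 0 := by
    intro r'; split_ifs <;> ring
  simp_rw [h, Finset.sum_ite_eq, Finset.mem_univ, if_true]

lemma isSymm_sum {ι : Type*} (s : Finset ι) (c : ι → ℝ)
    (M : ι → Matrix (Fin m) (Fin m) ℝ) (hM : ∀ r ∈ s, (M r).IsSymm) :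
    (∑ r ∈ s, c r • M r).IsSymm := by
  unfold Matrix.IsSymm
  rw [Matrix.transpose_sum]
  exact Finset.sum_congr rfl fun r hr => by rw [Matrix.transpose_smul, (hM r hr).eq]

lemma cm_sum_smul_left {ι : Type*} (s : Finset ι) (c : ι → ℝ)
    (M : ι → Matrix (Fin m) (Fin m) ℝ) (Z : Matrix (Fin m) (Fin m) ℝ) :
    cm (∑ r ∈ s, c r • M r) Z = ∑ r ∈ s, c r • cm (M r) Z := by
  simp only [cm, Finset.sum_mul, Finset.mul_sum, Matrix.smul_mul, Matrix.mul_smul,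
    smul_sub, Finset.sum_sub_distrib]

lemma cm_sum_smul_right {ι : Type*} (s : Finset ι) (c : ι → ℝ)
    (M : ι → Matrix (Fin m) (Fin m) ℝ) (Z : Matrix (Fin m) (Fin m) ℝ) :
    cm Z (∑ r ∈ s, c r • M r) = ∑ r ∈ s, c r • cm Z (M r) := by
  simp only [cm, Finset.sum_mul, Finset.mul_sum, Matrix.smul_mul, Matrix.mul_smul,
    smul_sub, Finset.sum_sub_distrib]

end DDVV


open DDVV in
/-- The DDVV inequality (Ge–Tang, Lu): for real symmetric traceless matrices
`A 1, …, A p`, one has `∑ r s, ‖[A r, A s]‖² ≤ (∑ r, ‖A r‖²)²`. -/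
theorem ddvv_inequality (m p : ℕ) (hm : 2 ≤ m) (hp : 1 ≤ p)
    (A : Fin p → Matrix (Fin m) (Fin m) ℝ)
    (hsymm : ∀ r, (A r).IsSymm) (htr : ∀ r, (A r).trace = 0) :
    ∑ r, ∑ s, frobSq (A r * A s - A s * A r) ≤ (∑ r, frobSq (A r)) ^ 2 := by
  classical
  set G : Matrix (Fin p) (Fin p) ℝ := Matrix.of (fun r t => ip (A r) (A t)) with hG
  have hGval : ∀ r t, G r t = ip (A r) (A t) := fun r t => rfl
  have hGsymm : G.IsSymm := by
    unfold Matrix.IsSymm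
    ext r t
    rw [Matrix.transpose_apply, hGval, hGval]
    exact ip_comm _ _
  obtain ⟨U, lam, hUtU, hUUt, hGeq⟩ := exists_diag G hGsymm
  set B : Fin p → Matrix (Fin m) (Fin m) ℝ := fun k => ∑ r, U r k • A r with hB
  have hBsymm : ∀ k, (B k).IsSymm := fun k =>
    isSymm_sum _ _ _ (fun r _ => hsymm r)
  have hUt' : ∀ M : Matrix (Fin p) (Fin p) ℝ, Uᵀ * (U * M) = M := fun M => by
    rw [← Matrix.mul_assoc, hUtU, Matrix.one_mul]
  have hDiag : Uᵀ * G * U = Matrix.diagonal lam := by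
    rw [hGeq]
    simp only [Matrix.mul_assoc, hUt']
    rw [hUtU, Matrix.mul_one]
  have hipBB : ∀ k l, ip (B k) (B l) = Matrix.diagonal lam k l := by
    intro k l
    have h1 : ip (B k) (B l) = ∑ r, U r k * ∑ t, U t l * ip (A r) (A t) := by
      show ip (∑ r, U r k • A r) (∑ t, U t l • A t) = _
      rw [ip_sum_smul]
      refine Finset.sum_congr rfl fun r _ => ?_
      rw [ip_sum_smul_right]
    have h2 : (Uᵀ * G * U) k l = ∑ t, ∑ r, (U r k * G r t) * U t l := by
      rw [Matrix.mul_apply]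
      refine Finset.sum_congr rfl fun t _ => ?_
      rw [Matrix.mul_apply, Finset.sum_mul]
      refine Finset.sum_congr rfl fun r _ => ?_
      rw [Matrix.transpose_apply]
    have h3 : ∑ t, ∑ r, (U r k * G r t) * U t l
        = ∑ r, U r k * ∑ t, U t l * ip (A r) (A t) := by
      rw [Finset.sum_comm]
      refine Finset.sum_congr rfl fun r _ => ?_
      rw [Finset.mul_sum]
      refine Finset.sum_congr rfl fun t _ => ?_
      rw [hGval]
      ring
    rw [h1, ← h3, ← h2, hDiag]
  have horthB : ∀ k l, k ≠ l → ip (B k) (B l) = 0 := by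
    intro k l hkl
    rw [hipBB k l, Matrix.diagonal_apply_ne lam hkl]
  have hmain := orth_family B hBsymm horthB
  -- identify RHS
  have hR : ∑ k, frobSq (B k) = ∑ r, frobSq (A r) := by
    simp_rw [frobSq_eq_ip]
    exact rotate_invariance U hUUt A
  -- identify LHS
  have step1 : ∀ l, ∑ k, frobSq (cm (B k) (B l)) = ∑ r, frobSq (cm (A r) (B l)) := by
    intro l
    have hbl : ∀ k, cm (B k) (B l) = ∑ r, U r k • cm (A r) (B l) := fun k => by
      show cm (∑ r, U r k • A r) (B l) = _
      exact cm_sum_smul_left _ _ _ _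
    simp_rw [hbl, frobSq_eq_ip]
    exact rotate_invariance U hUUt (fun r => cm (A r) (B l))
  have step2 : ∀ r, ∑ l, frobSq (cm (A r) (B l)) = ∑ t, frobSq (cm (A r) (A t)) := by
    intro r
    have hbr : ∀ l, cm (A r) (B l) = ∑ t, U t l • cm (A r) (A t) := fun l => by
      show cm (A r) (∑ t, U t l • A t) = _
      exact cm_sum_smul_right _ _ _ _
    simp_rw [hbr, frobSq_eq_ip]
    exact rotate_invariance U hUUt (fun t => cm (A r) (A t))
  have hL : ∑ k, ∑ l, frobSq (cm (B k) (B l)) = ∑ r, ∑ t, frobSq (cm (A r) (A t)) := by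
    rw [Finset.sum_comm]
    calc ∑ l, ∑ k, frobSq (cm (B k) (B l))
        = ∑ l, ∑ r, frobSq (cm (A r) (B l)) := Finset.sum_congr rfl fun l _ => step1 l
      _ = ∑ r, ∑ l, frobSq (cm (A r) (B l)) := Finset.sum_comm
      _ = ∑ r, ∑ t, frobSq (cm (A r) (A t)) := Finset.sum_congr rfl fun r _ => step2 r
  have hgoal_eq : ∑ r, ∑ s, frobSq (A r * A s - A s * A r)
      = ∑ r, ∑ t, frobSq (cm (A r) (A t)) := rfl
  rw [hgoal_eq, ← hL, ← hR]
  exact hmain
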